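/- Let (W,S) be a finite rank Coxeter system such that W is infinite. Suppose that for some s ∈ S the centralizer C_W(s) = {w ∈ W : sw = ws} is infinite. Then there exists a sequence (wᵢ) in C_W(s) with ℓ(wᵢ) → ∞ such that s ≰ wᵢ in the weak right order for all i. -/

import Mathlib

/-- Let `(W,S)` be a finite rank Coxeter system with `W` infinite and suppose
the centralizer of some generator `s` is infinite. Then there is a sequence
`(wᵢ)` of elements of the centralizer of `s` whose lengths tend to infinity
and such that `s ≰ wᵢ` in the weak right order
(`s ≤ w ↔ ℓ(w) = 1 + ℓ(s w)`) for all `i`. -/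
theorem exists_centralizer_seq_not_ge_simple
    {B : Type*} [Finite B] {W : Type*} [Group W] [Infinite W]
    {M : CoxeterMatrix B} (cs : CoxeterSystem M W) (s : B)
    (hcent : {w : W | cs.simple s * w = w * cs.simple s}.Infinite) :
    ∃ f : ℕ → W,
      (∀ n, cs.simple s * f n = f n * cs.simple s) ∧
      (∀ n, ¬ cs.length (f n) = 1 + cs.length (cs.simple s * f n)) ∧
      Filter.Tendsto (fun n => cs.length (f n)) Filter.atTop Filter.atTop := by
  -- balls are finite
  have hball : ∀ n : ℕ, {w : W | cs.length w ≤ n}.Finite := by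
    intro n
    have : {w : W | cs.length w ≤ n} ⊆ cs.wordProd '' {l : List B | l.length ≤ n} := by
      intro w hw
      obtain ⟨ω, hω, rfl⟩ := cs.exists_reduced_word w
      exact ⟨ω, by simpa [hω.eq] using hw, rfl⟩
    exact Set.Finite.subset (Set.Finite.image _ (List.finite_length_le B n)) this
  -- for each n, there is a centralizing element of length > n+1
  have key : ∀ n : ℕ, ∃ w : W, cs.simple s * w = w * cs.simple s ∧ n + 1 < cs.length w := by
    intro n
    by_contra h
    push_neg at h
    exact hcent ((hball (n + 1)).subset fun w hw => (h w hw))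
  choose g hg hglen using key
  -- adjust g so that s is not below g n
  refine ⟨fun n => if cs.length (g n) = 1 + cs.length (cs.simple s * g n)
      then cs.simple s * g n else g n, ?_, ?_, ?_⟩
  · intro n
    by_cases h : cs.length (g n) = 1 + cs.length (cs.simple s * g n)
    · simp only [if_pos h]
      rw [mul_assoc, hg n, ← mul_assoc]
    · simp only [if_neg h]; exact hg n
  · intro n
    by_cases h : cs.length (g n) = 1 + cs.length (cs.simple s * g n)
    · simp only [if_pos h]
      rw [← mul_assoc, cs.simple_mul_simple_self, one_mul]
      omega
    · simp only [if_neg h]; exact h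
  · have hge : ∀ n, n ≤ cs.length (if cs.length (g n) = 1 + cs.length (cs.simple s * g n)
        then cs.simple s * g n else g n) := by
      intro n
      by_cases h : cs.length (g n) = 1 + cs.length (cs.simple s * g n)
      · simp only [if_pos h]
        have := hglen n
        omega
      · simp only [if_neg h]
        have := hglen n
        omega
    exact Filter.tendsto_atTop_mono hge Filter.tendsto_id
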